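/- In the randomize-first-sample-second design, the mean-difference estimator τ̂ = ȳ(1) - ȳ(0), where ȳ(T) = (1/n_T)∑_i S_i^T Y_i(T), is an unbiased estimator of the finite-population average treatment effect τ = (1/N)∑_i (Y_i(1) - Y_i(0)). -/

import Mathlib

open Finset

/-- Expectation under the uniform distribution on a finite sample space. -/
noncomputable def Ex {α : Type*} (Ω : Finset α) (f : α → ℝ) : ℝ :=
  (∑ ω ∈ Ω, f ω) / (Ω.card : ℝ)

/-- The randomize-first-sample-second design: outcomes are triples `(A, B, C)`
where `A` is the treatment-1 group of size `N₁` (its complement is group 0),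
`B ⊆ A` is the size-`n₁` sample from group 1, and `C ⊆ Aᶜ` is the size-`n₀`
sample from group 0, all chosen uniformly at random. -/
def design2 (N N1 n1 n0 : ℕ) :
    Finset (Finset (Fin N) × Finset (Fin N) × Finset (Fin N)) :=
  Finset.univ.filter (fun p =>
    p.1.card = N1 ∧ p.2.1 ⊆ p.1 ∧ p.2.1.card = n1 ∧
    p.2.2 ⊆ p.1ᶜ ∧ p.2.2.card = n0)

/-- Indicator that unit `i` is sampled from treatment group 1. -/
def S1 {N : ℕ} (i : Fin N)
    (p : Finset (Fin N) × Finset (Fin N) × Finset (Fin N)) : ℝ :=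
  if i ∈ p.2.1 then 1 else 0

/-- Indicator that unit `i` is sampled from treatment group 0. -/
def S0 {N : ℕ} (i : Fin N)
    (p : Finset (Fin N) × Finset (Fin N) × Finset (Fin N)) : ℝ :=
  if i ∈ p.2.2 then 1 else 0

lemma mem_design2 {N N1 n1 n0 : ℕ}
    {p : Finset (Fin N) × Finset (Fin N) × Finset (Fin N)} :
    p ∈ design2 N N1 n1 n0 ↔ p.1.card = N1 ∧ p.2.1 ⊆ p.1 ∧ p.2.1.card = n1 ∧
      p.2.2 ⊆ p.1ᶜ ∧ p.2.2.card = n0 := by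
  simp [design2]

lemma design2_nonempty (N N1 n1 n0 : ℕ) (hN1 : N1 ≤ N) (hn1 : n1 ≤ N1)
    (hn0 : n0 ≤ N - N1) : (design2 N N1 n1 n0).Nonempty := by
  obtain ⟨A, hA, hAcard⟩ := Finset.exists_subset_card_eq (show N1 ≤ (univ : Finset (Fin N)).card by simpa using hN1)
  obtain ⟨B, hB, hBcard⟩ := Finset.exists_subset_card_eq (show n1 ≤ A.card from hAcard ▸ hn1)
  obtain ⟨C, hC, hCcard⟩ := Finset.exists_subset_card_eq
    (show n0 ≤ Aᶜ.card by rw [Finset.card_compl, hAcard]; simpa using hn0)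
  exact ⟨(A, B, C), mem_design2.2 ⟨hAcard, hB, hBcard, hC, hCcard⟩⟩

def act {N : ℕ} (σ : Equiv.Perm (Fin N))
    (p : Finset (Fin N) × Finset (Fin N) × Finset (Fin N)) :
    Finset (Fin N) × Finset (Fin N) × Finset (Fin N) :=
  (p.1.map σ.toEmbedding, p.2.1.map σ.toEmbedding, p.2.2.map σ.toEmbedding)

lemma compl_map {N : ℕ} (σ : Equiv.Perm (Fin N)) (s : Finset (Fin N)) :
    (s.map σ.toEmbedding)ᶜ = sᶜ.map σ.toEmbedding := by
  ext x; simp [Finset.mem_map_equiv]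

lemma act_mem {N N1 n1 n0 : ℕ} (σ : Equiv.Perm (Fin N))
    {p : Finset (Fin N) × Finset (Fin N) × Finset (Fin N)}
    (hp : p ∈ design2 N N1 n1 n0) : act σ p ∈ design2 N N1 n1 n0 := by
  obtain ⟨h1, h2, h3, h4, h5⟩ := mem_design2.1 hp
  refine mem_design2.2 ⟨?_, ?_, ?_, ?_, ?_⟩
  · simp [act, h1]
  · exact Finset.map_subset_map.2 h2
  · simp [act, h3]
  · show p.2.2.map σ.toEmbedding ⊆ (p.1.map σ.toEmbedding)ᶜ
    rw [compl_map]; exact Finset.map_subset_map.2 h4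
  · simp [act, h5]

lemma act_act {N : ℕ} (σ : Equiv.Perm (Fin N))
    (p : Finset (Fin N) × Finset (Fin N) × Finset (Fin N)) :
    act σ (act σ.symm p) = p := by
  unfold act
  ext <;> simp [Finset.mem_map_equiv]

lemma count_const {N N1 n1 n0 : ℕ}
    (sel : (Finset (Fin N) × Finset (Fin N) × Finset (Fin N)) → Finset (Fin N))
    (hsel : ∀ (σ : Equiv.Perm (Fin N)) p, sel (act σ p) = (sel p).map σ.toEmbedding)
    (i j : Fin N) :
    ((design2 N N1 n1 n0).filter (fun p => i ∈ sel p)).card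
      = ((design2 N N1 n1 n0).filter (fun p => j ∈ sel p)).card := by
  set σ := Equiv.swap i j with hσ
  have hσsymm : σ.symm = σ := Equiv.symm_swap i j
  refine Finset.card_bij' (fun p _ => act σ p) (fun p _ => act σ p) ?_ ?_ ?_ ?_
  · intro p hp
    obtain ⟨hp1, hp2⟩ := Finset.mem_filter.1 hp
    refine Finset.mem_filter.2 ⟨act_mem σ hp1, ?_⟩
    rw [hsel, Finset.mem_map_equiv, hσsymm]
    simpa [hσ, Equiv.swap_apply_right] using hp2
  · intro p hp
    obtain ⟨hp1, hp2⟩ := Finset.mem_filter.1 hp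
    refine Finset.mem_filter.2 ⟨act_mem σ hp1, ?_⟩
    rw [hsel, Finset.mem_map_equiv, hσsymm]
    simpa [hσ, Equiv.swap_apply_left] using hp2
  · intro p _; show act σ (act σ p) = p; conv_lhs => rw [← hσsymm]
    exact act_act σ p
  · intro p _; show act σ (act σ p) = p; conv_lhs => rw [← hσsymm]
    exact act_act σ p

lemma count_eq {N N1 n1 n0 : ℕ}
    (sel : (Finset (Fin N) × Finset (Fin N) × Finset (Fin N)) → Finset (Fin N))
    (hsel : ∀ (σ : Equiv.Perm (Fin N)) p, sel (act σ p) = (sel p).map σ.toEmbedding)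
    (k : ℕ) (hk : ∀ p ∈ design2 N N1 n1 n0, (sel p).card = k) (i : Fin N) :
    N * ((design2 N N1 n1 n0).filter (fun p => i ∈ sel p)).card
      = (design2 N N1 n1 n0).card * k := by
  have h1 : ∑ j : Fin N, ((design2 N N1 n1 n0).filter (fun p => j ∈ sel p)).card
      = N * ((design2 N N1 n1 n0).filter (fun p => i ∈ sel p)).card := by
    rw [Finset.sum_congr rfl (fun j _ => count_const sel hsel j i)]
    simp [mul_comm]
  rw [← h1]
  have h2 : ∀ j : Fin N, ((design2 N N1 n1 n0).filter (fun p => j ∈ sel p)).card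
      = ∑ p ∈ design2 N N1 n1 n0, if j ∈ sel p then 1 else 0 := by
    intro j; rw [Finset.card_filter]
  simp_rw [h2]
  rw [Finset.sum_comm]
  rw [Finset.sum_congr rfl (fun p hp => by
    rw [Finset.sum_ite_mem, Finset.univ_inter, Finset.sum_const, hk p hp, smul_eq_mul, mul_one])]
  simp [mul_comm]

theorem design2_mean_difference_unbiased (N N1 n1 n0 : ℕ)
    (hN1 : N1 ≤ N) (hn1 : 1 ≤ n1) (hn1' : n1 ≤ N1)
    (hn0 : 1 ≤ n0) (hn0' : n0 ≤ N - N1) (Y1 Y0 : Fin N → ℝ) :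
    Ex (design2 N N1 n1 n0)
      (fun p => (∑ i ∈ p.2.1, Y1 i) / (n1 : ℝ) - (∑ i ∈ p.2.2, Y0 i) / (n0 : ℝ))
      = (∑ i, (Y1 i - Y0 i)) / (N : ℝ) := by
  classical
  have hne := design2_nonempty N N1 n1 n0 hN1 hn1' hn0'
  set Ω := design2 N N1 n1 n0 with hΩ
  have hΩ0 : (Ω.card : ℝ) ≠ 0 := Nat.cast_ne_zero.2 (Finset.card_ne_zero_of_mem hne.choose_spec)
  have hNpos : (0:ℕ) < N := lt_of_lt_of_le (lt_of_lt_of_le hn1 hn1') hN1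
  have hN0 : (N:ℝ) ≠ 0 := Nat.cast_ne_zero.2 hNpos.ne'
  have hn1R : (n1:ℝ) ≠ 0 := Nat.cast_ne_zero.2 (by omega)
  have hn0R : (n0:ℝ) ≠ 0 := Nat.cast_ne_zero.2 (by omega)
  -- counting facts
  have key1 := count_eq (N := N) (N1 := N1) (n1 := n1) (n0 := n0) (fun p => p.2.1)
    (fun σ p => rfl) n1 (fun p hp => (mem_design2.1 hp).2.2.1)
  have key0 := count_eq (N := N) (N1 := N1) (n1 := n1) (n0 := n0) (fun p => p.2.2)
    (fun σ p => rfl) n0 (fun p hp => (mem_design2.1 hp).2.2.2.2)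
  -- rewrite the sums
  have sum1 : ∀ (Y : Fin N → ℝ) (sel : (Finset (Fin N) × Finset (Fin N) × Finset (Fin N)) → Finset (Fin N)),
      ∑ p ∈ Ω, ∑ i ∈ sel p, Y i
        = ∑ i, Y i * ((Ω.filter (fun p => i ∈ sel p)).card : ℝ) := by
    intro Y sel
    have : ∀ p, ∑ i ∈ sel p, Y i = ∑ i : Fin N, if i ∈ sel p then Y i else 0 := by
      intro p
      rw [Finset.sum_ite_mem, Finset.univ_inter]
    simp_rw [this]
    rw [Finset.sum_comm]
    refine Finset.sum_congr rfl fun i _ => ?_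
    rw [Finset.sum_ite, Finset.sum_const_zero, add_zero, Finset.sum_const, nsmul_eq_mul, mul_comm]
  have c1 : ∀ i : Fin N, ((Ω.filter (fun p => i ∈ p.2.1)).card : ℝ)
      = (Ω.card : ℝ) * n1 / N := by
    intro i
    have h : ((N:ℝ)) * ((Ω.filter (fun p => i ∈ p.2.1)).card : ℝ) = (Ω.card : ℝ) * n1 := by
      exact_mod_cast key1 i
    rw [eq_div_iff hN0]; linarith [h]
  have c0 : ∀ i : Fin N, ((Ω.filter (fun p => i ∈ p.2.2)).card : ℝ)
      = (Ω.card : ℝ) * n0 / N := by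
    intro i
    have h : ((N:ℝ)) * ((Ω.filter (fun p => i ∈ p.2.2)).card : ℝ) = (Ω.card : ℝ) * n0 := by
      exact_mod_cast key0 i
    rw [eq_div_iff hN0]; linarith [h]
  unfold Ex
  rw [Finset.sum_sub_distrib]
  simp_rw [div_eq_mul_inv, ← Finset.sum_mul]
  rw [sum1 Y1 (fun p => p.2.1), sum1 Y0 (fun p => p.2.2)]
  simp_rw [c1, c0]
  rw [← Finset.sum_mul, ← Finset.sum_mul, Finset.sum_sub_distrib]
  field_simp
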